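/- Let κ > 0, let u* be the optimal value of min{ u ∈ ℝ : Σ_{a ∈ A} q_a^{-1}(u) ≤ κ }, and define ξ*_a = q_a^{-1}(u*) for each a ∈ A. Then ξ* is optimal in min{ max_{a ∈ A} q_a(ξ_a) : ξ ∈ ℝ^A, ξ ≥ 0, Σ_a ξ_a ≤ κ } (in particular ξ* is feasible and max_a q_a(ξ*_a) = u*). Moreover, the set C(ξ*) = { a ∈ A : q_a(ξ*_a) = u* } is nonempty, q_a(ξ*_a) = u* for all a ∈ C(ξ*), and for every a ∈ A \ C(ξ*) one has ξ*_a = 0 and q_a(ξ*_a) = p̄_a ⋅ z_a ≤ u*. -/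

import Mathlib

/-- Auxiliary: minimization of a continuous function over a constrained simplex slice
is attained, and the infimum equals the value at the minimizer. -/
lemma attain_min_aux {S : Type*} [Fintype S]
    (f g : (S → ℝ) → ℝ) (hf : Continuous f) (hg : Continuous g) (c : ℝ)
    (hne : ∃ p, p ∈ stdSimplex ℝ S ∧ g p ≤ c) :
    ∃ p, (p ∈ stdSimplex ℝ S ∧ g p ≤ c) ∧
      f p = sInf (f '' {p | p ∈ stdSimplex ℝ S ∧ g p ≤ c}) ∧
      ∀ p', p' ∈ stdSimplex ℝ S → g p' ≤ c → f p ≤ f p' := by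
  have hK : IsCompact {p : S → ℝ | p ∈ stdSimplex ℝ S ∧ g p ≤ c} := by
    have hset : {p : S → ℝ | p ∈ stdSimplex ℝ S ∧ g p ≤ c}
        = stdSimplex ℝ S ∩ g ⁻¹' Set.Iic c := rfl
    rw [hset]
    exact (isCompact_stdSimplex ℝ S).inter_right (isClosed_Iic.preimage hg)
  obtain ⟨p, hp, hmin⟩ := hK.exists_isMinOn hne hf.continuousOn
  refine ⟨p, hp, ?_, fun p' h1 h2 => hmin ⟨h1, h2⟩⟩
  have hleast : IsLeast (f '' {p | p ∈ stdSimplex ℝ S ∧ g p ≤ c}) (f p) := by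
    refine ⟨⟨p, hp, rfl⟩, ?_⟩
    rintro y ⟨p', hp', rfl⟩
    exact hmin hp'
  exact hleast.csInf_eq.symm

/-- With `u*` the optimal value of `min{u : Σ_a q_a⁻¹(u) ≤ κ}` and
`ξ*_a = q_a⁻¹(u*)`, the vector `ξ*` is optimal in
`min{ max_a q_a(ξ_a) : ξ ≥ 0, Σ_a ξ_a ≤ κ }` (in particular it is feasible and
achieves `max_a q_a(ξ*_a) = u*`); the set `C(ξ*) = {a : q_a(ξ*_a) = u*}` is
nonempty, and every `a ∉ C(ξ*)` satisfies `ξ*_a = 0` and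
`q_a(ξ*_a) = p̄_a⋅z_a ≤ u*`. -/
theorem xi_star_optimal_and_structure
    {S A : Type*} [Fintype S] [Nonempty S] [Fintype A] [Nonempty A]
    (z : A → S → ℝ) (pbar : A → S → ℝ) (hpbar : ∀ a, pbar a ∈ stdSimplex ℝ S)
    (w : A → S → ℝ) (hw : ∀ a i, 0 < w a i)
    (κ : ℝ) (hκ : 0 < κ)
    (q : A → ℝ → ℝ)
    (hq : ∀ (a : A) (ξ : ℝ), q a ξ =
      sInf ((fun p : S → ℝ => ∑ i, z a i * p i) ''
        {p | p ∈ stdSimplex ℝ S ∧ ∑ i, w a i * |p i - pbar a i| ≤ ξ}))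
    (qinv : A → ℝ → ℝ)
    (hqinv : ∀ (a : A) (u : ℝ), qinv a u =
      sInf ((fun p : S → ℝ => ∑ i, w a i * |p i - pbar a i|) ''
        {p | p ∈ stdSimplex ℝ S ∧ ∑ i, z a i * p i ≤ u}))
    (ustar : ℝ)
    (hustar : IsLeast {u : ℝ |
        (∀ a, ∃ p ∈ stdSimplex ℝ S, ∑ i, z a i * p i ≤ u) ∧
        ∑ a, qinv a u ≤ κ} ustar)
    (ξstar : A → ℝ) (hξstar : ∀ a, ξstar a = qinv a ustar) :
    ((∀ a, 0 ≤ ξstar a) ∧ ∑ a, ξstar a ≤ κ) ∧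
    (⨆ a, q a (ξstar a)) = ustar ∧
    (∀ ξ : A → ℝ, (∀ a, 0 ≤ ξ a) → ∑ a, ξ a ≤ κ →
      (⨆ a, q a (ξstar a)) ≤ ⨆ a, q a (ξ a)) ∧
    (∃ a, q a (ξstar a) = ustar) ∧
    (∀ a, q a (ξstar a) ≠ ustar →
      ξstar a = 0 ∧ q a (ξstar a) = ∑ i, pbar a i * z a i ∧ q a (ξstar a) ≤ ustar) := by
  classical
  -- continuity facts
  have hfc : ∀ a, Continuous (fun p : S → ℝ => ∑ i, z a i * p i) := fun a =>
    continuous_finset_sum _ fun i _ => continuous_const.mul (continuous_apply i)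
  have hgc : ∀ a, Continuous (fun p : S → ℝ => ∑ i, w a i * |p i - pbar a i|) := fun a =>
    continuous_finset_sum _ fun i _ =>
      continuous_const.mul (((continuous_apply i).sub continuous_const).abs)
  have hgnn : ∀ a (p : S → ℝ), 0 ≤ ∑ i, w a i * |p i - pbar a i| := fun a p =>
    Finset.sum_nonneg fun i _ => mul_nonneg (hw a i).le (abs_nonneg _)
  -- attainment for q
  have hattq : ∀ a (ξ : ℝ), 0 ≤ ξ → ∃ p, (p ∈ stdSimplex ℝ S ∧
      ∑ i, w a i * |p i - pbar a i| ≤ ξ) ∧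
      (∑ i, z a i * p i) = q a ξ ∧
      ∀ p', p' ∈ stdSimplex ℝ S → (∑ i, w a i * |p' i - pbar a i|) ≤ ξ →
        (∑ i, z a i * p i) ≤ ∑ i, z a i * p' i := by
    intro a ξ hξ
    obtain ⟨p, hp, heq, hmin⟩ := attain_min_aux (fun p : S → ℝ => ∑ i, z a i * p i)
      (fun p : S → ℝ => ∑ i, w a i * |p i - pbar a i|) (hfc a) (hgc a) ξ
      ⟨pbar a, hpbar a, by simp [hξ]⟩
    exact ⟨p, hp, by rw [hq]; exact heq, hmin⟩
  -- attainment for qinv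
  have hattqi : ∀ a (u : ℝ), (∃ p ∈ stdSimplex ℝ S, ∑ i, z a i * p i ≤ u) →
      ∃ p, (p ∈ stdSimplex ℝ S ∧ ∑ i, z a i * p i ≤ u) ∧
      (∑ i, w a i * |p i - pbar a i|) = qinv a u := by
    intro a u hne
    obtain ⟨p, hmem, hle⟩ := hne
    obtain ⟨p', hp', heq, _⟩ := attain_min_aux (fun p : S → ℝ => ∑ i, w a i * |p i - pbar a i|)
      (fun p : S → ℝ => ∑ i, z a i * p i) (hgc a) (hfc a) u ⟨p, hmem, hle⟩
    exact ⟨p', hp', by rw [hqinv]; exact heq⟩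
  -- qinv ≤ any feasible norm
  have hqinv_le : ∀ a (u : ℝ) (p : S → ℝ), p ∈ stdSimplex ℝ S → (∑ i, z a i * p i) ≤ u →
      qinv a u ≤ ∑ i, w a i * |p i - pbar a i| := by
    intro a u p hmem hle
    rw [hqinv]
    refine csInf_le ⟨0, ?_⟩ ⟨p, ⟨hmem, hle⟩, rfl⟩
    rintro y ⟨p', _, rfl⟩
    exact hgnn a p'
  obtain ⟨⟨hfeas, hsumq⟩, hmin_u⟩ := hustar
  -- nonnegativity of ξstar
  have hxnn : ∀ a, 0 ≤ ξstar a := by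
    intro a
    rw [hξstar, hqinv]
    refine Real.sInf_nonneg ?_
    rintro y ⟨p, _, rfl⟩
    exact hgnn a p
  have hsum : ∑ a, ξstar a ≤ κ := by
    calc ∑ a, ξstar a = ∑ a, qinv a ustar := by simp [hξstar]
    _ ≤ κ := hsumq
  -- q a (ξstar a) ≤ ustar for every a
  have hqle : ∀ a, q a (ξstar a) ≤ ustar := by
    intro a
    obtain ⟨pa, ⟨hpam, hpaz⟩, hpan⟩ := hattqi a ustar (hfeas a)
    obtain ⟨pm, _, heq, hminm⟩ := hattq a (ξstar a) (hxnn a)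
    rw [← heq]
    refine le_trans (hminm pa hpam ?_) hpaz
    rw [hpan, ← hξstar]
  -- sup = ustar
  have hbdd : BddAbove (Set.range fun a => q a (ξstar a)) := Finite.bddAbove_range _
  have hsup_le : (⨆ a, q a (ξstar a)) ≤ ustar := ciSup_le hqle
  have hsup_eq : (⨆ a, q a (ξstar a)) = ustar := by
    refine le_antisymm hsup_le ?_
    set m := ⨆ a, q a (ξstar a) with hm
    -- for each a, pick minimizer of q at ξstar a
    have hmem : m ∈ {u : ℝ |
        (∀ a, ∃ p ∈ stdSimplex ℝ S, ∑ i, z a i * p i ≤ u) ∧ ∑ a, qinv a u ≤ κ} := by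
      constructor
      · intro a
        obtain ⟨pm, ⟨hpm, _⟩, heq, _⟩ := hattq a (ξstar a) (hxnn a)
        exact ⟨pm, hpm, by rw [heq]; exact le_ciSup hbdd a⟩
      · have h1 : ∀ a, qinv a m ≤ ξstar a := by
          intro a
          obtain ⟨pm, ⟨hpm, hpmn⟩, heq, _⟩ := hattq a (ξstar a) (hxnn a)
          refine le_trans (hqinv_le a m pm hpm ?_) hpmn
          rw [heq]; exact le_ciSup hbdd a
        calc ∑ a, qinv a m ≤ ∑ a, ξstar a := Finset.sum_le_sum fun a _ => h1 a
        _ ≤ κ := hsum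
    exact hmin_u hmem
  refine ⟨⟨hxnn, hsum⟩, hsup_eq, ?_, ?_, ?_⟩
  · -- optimality
    intro ξ hξnn hξsum
    rw [hsup_eq]
    set M := ⨆ a, q a (ξ a) with hM
    have hbdd' : BddAbove (Set.range fun a => q a (ξ a)) := Finite.bddAbove_range _
    have hmem : M ∈ {u : ℝ |
        (∀ a, ∃ p ∈ stdSimplex ℝ S, ∑ i, z a i * p i ≤ u) ∧ ∑ a, qinv a u ≤ κ} := by
      constructor
      · intro a
        obtain ⟨pm, ⟨hpm, _⟩, heq, _⟩ := hattq a (ξ a) (hξnn a)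
        exact ⟨pm, hpm, by rw [heq]; exact le_ciSup hbdd' a⟩
      · have h1 : ∀ a, qinv a M ≤ ξ a := by
          intro a
          obtain ⟨pm, ⟨hpm, hpmn⟩, heq, _⟩ := hattq a (ξ a) (hξnn a)
          refine le_trans (hqinv_le a M pm hpm ?_) hpmn
          rw [heq]; exact le_ciSup hbdd' a
        calc ∑ a, qinv a M ≤ ∑ a, ξ a := Finset.sum_le_sum fun a _ => h1 a
        _ ≤ κ := hξsum
    exact hmin_u hmem
  · -- attainment of sup
    obtain ⟨a, ha⟩ := exists_eq_ciSup_of_finite (f := fun a => q a (ξstar a))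
    exact ⟨a, by rw [ha, hsup_eq]⟩
  · -- structure of non-active a
    intro a hne
    have hlt : q a (ξstar a) < ustar := lt_of_le_of_ne (hqle a) hne
    -- first show ξstar a = 0
    have hz : ξstar a = 0 := by
      by_contra h0
      have hpos : 0 < ξstar a := lt_of_le_of_ne (hxnn a) (Ne.symm h0)
      obtain ⟨pm, ⟨hpm, hpmn⟩, heq, _⟩ := hattq a (ξstar a) (hxnn a)
      set ε := ustar - q a (ξstar a) with hε
      have hεpos : 0 < ε := by simp [hε]; linarith
      set D := (∑ i, z a i * pbar a i) - q a (ξstar a) with hD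
      set t := ε / (ε + |D| + 1) with ht
      have hden : 0 < ε + |D| + 1 := by positivity
      have ht0 : 0 < t := div_pos hεpos hden
      have ht1 : t < 1 := by
        rw [ht, div_lt_one hden]
        have := abs_nonneg D
        linarith
      have htD : t * D ≤ ε := by
        have h1 : t * D ≤ t * |D| := mul_le_mul_of_nonneg_left (le_abs_self D) ht0.le
        have h2 : t * |D| ≤ ε := by
          rw [ht, div_mul_eq_mul_div, div_le_iff₀ hden]
          have := abs_nonneg D
          nlinarith [hεpos]
        linarith
      set p' := fun i => t * pbar a i + (1 - t) * pm i with hp'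
      have hp'mem : p' ∈ stdSimplex ℝ S := by
        constructor
        · intro i
          exact add_nonneg (mul_nonneg ht0.le ((hpbar a).1 i))
            (mul_nonneg (by linarith) (hpm.1 i))
        · simp only [hp', Finset.sum_add_distrib, ← Finset.mul_sum, (hpbar a).2, hpm.2]
          ring
      have hp'z : (∑ i, z a i * p' i) ≤ ustar := by
        have hval : (∑ i, z a i * p' i)
            = t * (∑ i, z a i * pbar a i) + (1 - t) * (∑ i, z a i * pm i) := by
          simp only [hp', Finset.mul_sum]
          rw [← Finset.sum_add_distrib]
          exact Finset.sum_congr rfl fun i _ => by ring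
        rw [hval, heq]
        have : t * (∑ i, z a i * pbar a i) + (1 - t) * q a (ξstar a)
            = q a (ξstar a) + t * D := by rw [hD]; ring
        rw [this]
        linarith
      have hp'n : (∑ i, w a i * |p' i - pbar a i|)
          = (1 - t) * ∑ i, w a i * |pm i - pbar a i| := by
        rw [Finset.mul_sum]
        refine Finset.sum_congr rfl fun i _ => ?_
        have h1 : p' i - pbar a i = (1 - t) * (pm i - pbar a i) := by rw [hp']; ring
        rw [h1, abs_mul, abs_of_nonneg (by linarith : (0:ℝ) ≤ 1 - t)]
        ring
      have hcontra : qinv a ustar ≤ (1 - t) * ξstar a := by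
        refine le_trans (hqinv_le a ustar p' hp'mem hp'z) ?_
        rw [hp'n]
        exact mul_le_mul_of_nonneg_left hpmn (by linarith)
      have : ξstar a ≤ (1 - t) * ξstar a := by rw [hξstar] at *; exact hcontra
      nlinarith
    -- q a 0 = z · pbar
    obtain ⟨pm, ⟨hpm, hpmn⟩, heq, _⟩ := hattq a (ξstar a) (hxnn a)
    have hpm_eq : pm = pbar a := by
      rw [hz] at hpmn
      have hzero : (∑ i, w a i * |pm i - pbar a i|) = 0 :=
        le_antisymm hpmn (hgnn a pm)
      funext i
      have := (Finset.sum_eq_zero_iff_of_nonneg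
        (fun i _ => mul_nonneg (hw a i).le (abs_nonneg _))).mp hzero i (Finset.mem_univ i)
      have habs : |pm i - pbar a i| = 0 := by
        rcases mul_eq_zero.mp this with h | h
        · exact absurd h (ne_of_gt (hw a i))
        · exact h
      have := abs_eq_zero.mp habs
      linarith
    refine ⟨hz, ?_, hqle a⟩
    rw [← heq, hpm_eq]
    exact Finset.sum_congr rfl fun i _ => mul_comm _ _
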